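/- Let T > 0, let y : [0,T] → ℝ be continuous, and let g, β : [0,T] → ℝ be integrable with g ≥ 0. Assume that for all 0 ≤ s ≤ t ≤ T: y(t) + ∫_s^t g(τ) y(τ) dτ ≤ y(s) + ∫_s^t β(τ) dτ. Then for all t ∈ [0,T]: y(t) ≤ y(0) exp( − ∫₀^t g(τ) dτ ) + ∫₀^t exp( − ∫_τ^t g(r) dr ) β(τ) dτ. -/

import Mathlib

set_option maxHeartbeats 1000000

open MeasureTheory Real Set intervalIntegral


/-- FTC for exp of a primitive of a continuous function. -/
lemma exp_primitive_ftc (g : ℝ → ℝ) (hgc : Continuous g) (a b : ℝ) :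
    ∫ τ in a..b, g τ * Real.exp (∫ r in (0:ℝ)..τ, g r)
      = Real.exp (∫ r in (0:ℝ)..b, g r) - Real.exp (∫ r in (0:ℝ)..a, g r) := by
  have hG : ∀ u : ℝ, HasDerivAt (fun v => ∫ r in (0:ℝ)..v, g r) (g u) u := by
    intro u
    exact intervalIntegral.integral_hasDerivAt_right (hgc.intervalIntegrable 0 u)
      (hgc.stronglyMeasurableAtFilter _ _) hgc.continuousAt
  have hE : ∀ u : ℝ, HasDerivAt (fun v => Real.exp (∫ r in (0:ℝ)..v, g r))
      (g u * Real.exp (∫ r in (0:ℝ)..u, g r)) u := by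
    intro u
    have := (hG u).exp
    simpa [mul_comm] using this
  exact intervalIntegral.integral_eq_sub_of_hasDerivAt (fun x _ => hE x)
    (((hgc.mul (Real.continuous_exp.comp
      (intervalIntegral.continuous_primitive (fun c d => hgc.intervalIntegrable c d) 0)))).intervalIntegrable a b)

lemma fubini_triangle (a r : ℝ → ℝ) (t : ℝ) (ht : 0 ≤ t)
    (ha : Continuous a) (hr : IntegrableOn r (Icc 0 t)) :
    ∫ τ in (0:ℝ)..t, a τ * (∫ σ in (0:ℝ)..τ, r σ)
      = ∫ σ in (0:ℝ)..t, (∫ τ in σ..t, a τ) * r σ := by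
  have hrI : IntegrableOn r (Ioc 0 t) := hr.mono_set Ioc_subset_Icc_self
  have haI : IntegrableOn a (Ioc 0 t) := ha.integrableOn_Icc.mono_set Ioc_subset_Icc_self
  set F : ℝ × ℝ → ℝ := fun q => Set.indicator {q : ℝ × ℝ | q.2 ≤ q.1} (fun q => a q.1 * r q.2) q with hF
  have hFint : Integrable F ((volume.restrict (Ioc 0 t)).prod (volume.restrict (Ioc 0 t))) :=
    (haI.mul_prod hrI).indicator (measurableSet_le measurable_snd measurable_fst)
  have swap : ∫ τ in Ioc 0 t, (∫ σ in Ioc 0 t, F (τ, σ)) = ∫ σ in Ioc 0 t, (∫ τ in Ioc 0 t, F (τ, σ)) :=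
    MeasureTheory.integral_integral_swap hFint
  have lhs : ∫ τ in (0:ℝ)..t, a τ * (∫ σ in (0:ℝ)..τ, r σ)
      = ∫ τ in Ioc 0 t, (∫ σ in Ioc 0 t, F (τ, σ)) := by
    rw [intervalIntegral.integral_of_le ht]
    refine setIntegral_congr_fun measurableSet_Ioc (fun τ hτ => ?_)
    have h1 : ∀ σ : ℝ, F (τ, σ) = Set.indicator (Iic τ) (fun σ => a τ * r σ) σ := by
      intro σ
      by_cases hσ : σ ≤ τ
      · simp [hF, Set.indicator_of_mem, hσ, Set.mem_Iic.mpr hσ]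
      · simp [hF, Set.indicator_of_notMem, hσ]
    simp only [h1]
    rw [MeasureTheory.setIntegral_indicator measurableSet_Iic]
    have h2 : Ioc 0 t ∩ Iic τ = Ioc 0 τ := by
      ext x; simp only [Set.mem_inter_iff, Set.mem_Ioc, Set.mem_Iic]
      constructor
      · rintro ⟨⟨h1', h2'⟩, h3'⟩; exact ⟨h1', h3'⟩
      · rintro ⟨h1', h2'⟩; exact ⟨⟨h1', h2'.trans hτ.2⟩, h2'⟩
    rw [h2, intervalIntegral.integral_of_le hτ.1.le, MeasureTheory.integral_const_mul]
  have rhs : ∫ σ in (0:ℝ)..t, (∫ τ in σ..t, a τ) * r σ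
      = ∫ σ in Ioc 0 t, (∫ τ in Ioc 0 t, F (τ, σ)) := by
    rw [intervalIntegral.integral_of_le ht]
    refine setIntegral_congr_fun measurableSet_Ioc (fun σ hσ => ?_)
    have h1 : ∀ τ : ℝ, F (τ, σ) = Set.indicator (Ici σ) (fun τ => a τ * r σ) τ := by
      intro τ
      by_cases hτ : σ ≤ τ
      · simp [hF, Set.indicator_of_mem, hτ, Set.mem_Ici.mpr hτ]
      · simp [hF, Set.indicator_of_notMem, hτ]
    simp only [h1]
    rw [MeasureTheory.setIntegral_indicator measurableSet_Ici]
    have h2 : Ioc 0 t ∩ Ici σ = Icc σ t := by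
      ext x; simp only [Set.mem_inter_iff, Set.mem_Ioc, Set.mem_Icc, Set.mem_Ici]
      constructor
      · rintro ⟨⟨h1', h2'⟩, h3'⟩; exact ⟨h3', h2'⟩
      · rintro ⟨h1', h2'⟩; exact ⟨⟨lt_of_lt_of_le hσ.1 h1', h2'⟩, h1'⟩
    rw [h2, MeasureTheory.integral_Icc_eq_integral_Ioc, ← intervalIntegral.integral_of_le hσ.2]
    exact (intervalIntegral.integral_mul_const _ _).symm
  rw [lhs, rhs, swap]

lemma exp_neg_lip {a b : ℝ} (ha : 0 ≤ a) (hb : 0 ≤ b) :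
    |Real.exp (-a) - Real.exp (-b)| ≤ |a - b| := by
  have key : ∀ u v : ℝ, 0 ≤ u → u ≤ v → Real.exp (-u) - Real.exp (-v) ≤ v - u := by
    intro u v hu huv
    have h1 : Real.exp (-u) ≤ 1 := Real.exp_le_one_iff.mpr (by linarith)
    have h2 : (u - v) + 1 ≤ Real.exp (u - v) := Real.add_one_le_exp (u - v)
    have h3 : Real.exp (-v) = Real.exp (-u) * Real.exp (u - v) := by
      rw [← Real.exp_add]; ring_nf
    nlinarith [Real.exp_pos (-u)]
  rcases le_total a b with hab | hab
  · rw [abs_of_nonneg (sub_nonneg.mpr (Real.exp_le_exp.mpr (neg_le_neg hab))),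
      abs_of_nonpos (sub_nonpos.mpr hab)]
    have := key a b ha hab; linarith
  · rw [abs_of_nonpos (sub_nonpos.mpr (Real.exp_le_exp.mpr (neg_le_neg hab))),
      abs_of_nonneg (sub_nonneg.mpr hab)]
    have := key b a hb hab; linarith

lemma gronwall_core (T : ℝ) (y β g : ℝ → ℝ)
    (hy : ContinuousOn y (Set.Icc 0 T))
    (hβ : IntegrableOn β (Set.Icc 0 T))
    (hgc : Continuous g) (hg0 : ∀ τ, 0 ≤ g τ)
    (h : ∀ s t : ℝ, 0 ≤ s → s ≤ t → t ≤ T →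
      y t + ∫ τ in s..t, g τ * y τ ≤ y s + ∫ τ in s..t, β τ) :
    ∀ t ∈ Set.Icc 0 T,
      y t ≤ y 0 * Real.exp (-∫ τ in (0:ℝ)..t, g τ)
        + ∫ τ in (0:ℝ)..t, Real.exp (-∫ r in τ..t, g r) * β τ := by
  intro t ht
  obtain ⟨ht0, htT⟩ := ht
  set G : ℝ → ℝ := fun u => ∫ r in (0:ℝ)..u, g r with hGdef
  set E : ℝ → ℝ := fun u => Real.exp (G u) with hEdef
  set r : ℝ → ℝ := fun τ => g τ * y τ - β τ with hrdef
  set R : ℝ → ℝ := fun u => ∫ σ in (0:ℝ)..u, r σ with hRdef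
  -- continuity of E
  have hGcont : Continuous G :=
    intervalIntegral.continuous_primitive (fun c d => hgc.intervalIntegrable c d) 0
  have hEcont : Continuous E := Real.continuous_exp.comp hGcont
  -- integrability
  have hq : IntegrableOn (fun τ => g τ * y τ) (Icc 0 T) :=
    (hgc.continuousOn.mul hy).integrableOn_Icc
  have hrT : IntegrableOn r (Icc 0 T) := hq.sub hβ
  have hsub : ∀ (f : ℝ → ℝ), IntegrableOn f (Icc 0 T) → ∀ s u : ℝ, 0 ≤ s → s ≤ u → u ≤ T →
      IntervalIntegrable f volume s u := by
    intro f hf s u hs hsu huT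
    have : IntegrableOn f (Icc s u) := hf.mono_set (Icc_subset_Icc hs huT)
    rw [← uIcc_of_le hsu] at this
    exact this.intervalIntegrable
  -- p := y + R is antitone
  have hp : ∀ s u : ℝ, 0 ≤ s → s ≤ u → u ≤ T → y u + R u ≤ y s + R s := by
    intro s u hs hsu huT
    have h1 := h s u hs hsu huT
    have h2 : (∫ σ in (0:ℝ)..s, r σ) + ∫ σ in s..u, r σ = ∫ σ in (0:ℝ)..u, r σ :=
      intervalIntegral.integral_add_adjacent_intervals
        (hsub r hrT 0 s le_rfl hs (hsu.trans huT))
        (hsub r hrT s u hs hsu huT)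
    have h3 : ∫ σ in s..u, r σ = (∫ σ in s..u, g σ * y σ) - ∫ σ in s..u, β σ :=
      intervalIntegral.integral_sub (hsub _ hq s u hs hsu huT) (hsub _ hβ s u hs hsu huT)
    simp only [hRdef]
    linarith
  -- FTC for E
  have hEf : ∀ a b : ℝ, ∫ τ in a..b, g τ * E τ = E b - E a := fun a b =>
    exp_primitive_ftc g hgc a b
  have hE0 : E 0 = 1 := by simp [hEdef, hGdef]
  -- interval integrabilities on [0, t]
  have hrt : IntervalIntegrable r volume 0 t := hsub r hrT 0 t le_rfl ht0 htT
  have hβt : IntervalIntegrable β volume 0 t := hsub β hβ 0 t le_rfl ht0 htT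
  have hqt : IntervalIntegrable (fun τ => g τ * y τ) volume 0 t := hsub _ hq 0 t le_rfl ht0 htT
  have hgEt : IntervalIntegrable (fun τ => g τ * E τ) volume 0 t :=
    (hgc.mul hEcont).intervalIntegrable 0 t
  have hErt : IntervalIntegrable (fun σ => E σ * r σ) volume 0 t :=
    hrt.continuousOn_mul hEcont.continuousOn
  have hEβt : IntervalIntegrable (fun σ => E σ * β σ) volume 0 t :=
    hβt.continuousOn_mul hEcont.continuousOn
  have hgEyt : IntervalIntegrable (fun τ => g τ * E τ * y τ) volume 0 t := by
    have : IntervalIntegrable (fun τ => g τ * y τ * E τ) volume 0 t :=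
      hqt.mul_continuousOn hEcont.continuousOn
    refine this.congr ?_
    intro τ _; beta_reduce; ring
  have hRcont : ContinuousOn R (uIcc 0 t) := by
    apply intervalIntegral.continuousOn_primitive_interval
    exact hrT.mono_set (by rw [uIcc_of_le ht0]; exact Icc_subset_Icc le_rfl htT)
  have hgERt : IntervalIntegrable (fun τ => g τ * E τ * R τ) volume 0 t :=
    hgEt.mul_continuousOn hRcont
  -- Fubini + FTC:  B + C = E t * R t
  have keyA : (∫ τ in (0:ℝ)..t, g τ * E τ * R τ) + (∫ σ in (0:ℝ)..t, E σ * r σ)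
      = E t * R t := by
    have f1 : ∫ τ in (0:ℝ)..t, g τ * E τ * R τ
        = ∫ σ in (0:ℝ)..t, (∫ τ in σ..t, g τ * E τ) * r σ := by
      have := fubini_triangle (fun τ => g τ * E τ) r t ht0 (hgc.mul hEcont)
        (hrT.mono_set (Icc_subset_Icc le_rfl htT))
      simpa [hRdef] using this
    have f2 : ∫ σ in (0:ℝ)..t, (∫ τ in σ..t, g τ * E τ) * r σ
        = ∫ σ in (0:ℝ)..t, (E t * r σ - E σ * r σ) := by
      refine intervalIntegral.integral_congr (fun σ _ => ?_)
      rw [hEf σ t]; ring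
    have f3 : ∫ σ in (0:ℝ)..t, (E t * r σ - E σ * r σ)
        = E t * R t - ∫ σ in (0:ℝ)..t, E σ * r σ := by
      rw [intervalIntegral.integral_sub (hrt.const_mul (E t)) hErt,
        intervalIntegral.integral_const_mul]
    rw [f1, f2, f3]; ring
  -- C = A - D
  have hCAD : (∫ σ in (0:ℝ)..t, E σ * r σ)
      = (∫ τ in (0:ℝ)..t, g τ * E τ * y τ) - ∫ σ in (0:ℝ)..t, E σ * β σ := by
    have : ∫ σ in (0:ℝ)..t, E σ * r σ
        = ∫ σ in (0:ℝ)..t, (g σ * E σ * y σ - E σ * β σ) := by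
      refine intervalIntegral.integral_congr (fun σ _ => ?_)
      simp only [hrdef]; ring
    rw [this, intervalIntegral.integral_sub hgEyt hEβt]
  -- monotonicity step
  have hmono : (y t + R t) * (E t - 1)
      ≤ (∫ τ in (0:ℝ)..t, g τ * E τ * y τ) + ∫ τ in (0:ℝ)..t, g τ * E τ * R τ := by
    have m1 : ∫ τ in (0:ℝ)..t, (y t + R t) * (g τ * E τ)
        ≤ ∫ τ in (0:ℝ)..t, g τ * E τ * (y τ + R τ) := by
      apply intervalIntegral.integral_mono_on ht0 (hgEt.const_mul _)
      · refine (hgEyt.add hgERt).congr ?_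
        intro τ _; beta_reduce; ring
      · intro τ hτ
        have hgE : 0 ≤ g τ * E τ := mul_nonneg (hg0 τ) (Real.exp_pos _).le
        have := hp τ t hτ.1 hτ.2 htT
        nlinarith
    have m2 : ∫ τ in (0:ℝ)..t, (y t + R t) * (g τ * E τ) = (y t + R t) * (E t - 1) := by
      rw [intervalIntegral.integral_const_mul, hEf 0 t, hE0]
    have m3 : ∫ τ in (0:ℝ)..t, g τ * E τ * (y τ + R τ)
        = (∫ τ in (0:ℝ)..t, g τ * E τ * y τ) + ∫ τ in (0:ℝ)..t, g τ * E τ * R τ := by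
      rw [← intervalIntegral.integral_add hgEyt hgERt]
      refine intervalIntegral.integral_congr (fun τ _ => ?_)
      ring
    linarith [m1, m2.symm.le, m3.le]
  -- conclude E t * y t ≤ y 0 + D
  have hp0 : y t + R t ≤ y 0 + R 0 := hp 0 t le_rfl ht0 htT
  have hR0 : R 0 = 0 := by simp [hRdef]
  have hEyt : E t * y t ≤ y 0 + ∫ σ in (0:ℝ)..t, E σ * β σ := by
    have expand : E t * y t = E t * (y t + R t) - E t * R t := by ring
    have expand2 : (y t + R t) * (E t - 1) = E t * (y t + R t) - (y t + R t) := by ring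
    linarith
  -- divide by E t
  have hmul : Real.exp (G t) * Real.exp (-G t) = 1 := by
    rw [← Real.exp_add]; simp
  have hyle : y t ≤ (y 0 + ∫ σ in (0:ℝ)..t, E σ * β σ) * Real.exp (-G t) := by
    have h5 := mul_le_mul_of_nonneg_right hEyt (Real.exp_pos (-G t)).le
    calc y t = E t * y t * Real.exp (-G t) := by
          rw [hEdef]; rw [mul_comm (Real.exp (G t)) (y t), mul_assoc, hmul, mul_one]
      _ ≤ _ := h5
  -- rewrite RHS
  have hadd : ∀ σ : ℝ, G σ + (∫ r in σ..t, g r) = G t := fun σ =>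
    intervalIntegral.integral_add_adjacent_intervals (hgc.intervalIntegrable 0 σ)
      (hgc.intervalIntegrable σ t)
  have hfinal : (y 0 + ∫ σ in (0:ℝ)..t, E σ * β σ) * Real.exp (-G t)
      = y 0 * Real.exp (-∫ τ in (0:ℝ)..t, g τ)
        + ∫ τ in (0:ℝ)..t, Real.exp (-∫ r in τ..t, g r) * β τ := by
    have e1 : (∫ σ in (0:ℝ)..t, E σ * β σ) * Real.exp (-G t)
        = ∫ σ in (0:ℝ)..t, Real.exp (-∫ r in σ..t, g r) * β σ := by
      rw [← intervalIntegral.integral_mul_const]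
      refine intervalIntegral.integral_congr (fun σ _ => ?_)
      have e2 : G σ + -G t = -∫ r in σ..t, g r := by have := hadd σ; linarith
      rw [hEdef]
      calc Real.exp (G σ) * β σ * Real.exp (-G t)
          = Real.exp (G σ + -G t) * β σ := by rw [Real.exp_add]; ring
        _ = Real.exp (-∫ r in σ..t, g r) * β σ := by rw [e2]
    have : G t = ∫ τ in (0:ℝ)..t, g τ := rfl
    rw [add_mul, e1, this]
  linarith [hyle, hfinal.le, hfinal.ge]

/-- **Gronwall-type lemma in integrated form** (Lemma 2.3 of the paper).
If a continuous `y` satisfies `y(t) + ∫_s^t g y ≤ y(s) + ∫_s^t β` for all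
`0 ≤ s ≤ t ≤ T`, with `g ≥ 0` and `g, β` integrable, then
`y(t) ≤ y(0) e^{−∫₀^t g} + ∫₀^t e^{−∫_τ^t g} β(τ) dτ`. -/
theorem gronwall_integrated_form
    (T : ℝ) (hT : 0 < T)
    (y g β : ℝ → ℝ)
    (hy : ContinuousOn y (Set.Icc 0 T))
    (hg : IntegrableOn g (Set.Icc 0 T))
    (hβ : IntegrableOn β (Set.Icc 0 T))
    (hg_nonneg : ∀ τ ∈ Set.Icc 0 T, 0 ≤ g τ)
    (h : ∀ s t : ℝ, 0 ≤ s → s ≤ t → t ≤ T →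
      y t + ∫ τ in s..t, g τ * y τ ≤ y s + ∫ τ in s..t, β τ) :
    ∀ t ∈ Set.Icc 0 T,
      y t ≤ y 0 * Real.exp (-∫ τ in (0:ℝ)..t, g τ)
        + ∫ τ in (0:ℝ)..t, Real.exp (-∫ r in τ..t, g r) * β τ := by
  intro t ht
  obtain ⟨ht0, htT⟩ := ht
  -- a bound on y
  obtain ⟨M, hM⟩ := (isCompact_Icc : IsCompact (Icc (0:ℝ) T)).exists_bound_of_continuousOn hy
  have hM0 : 0 ≤ M := le_trans (norm_nonneg _) (hM 0 ⟨le_rfl, hT.le⟩)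
  set Cβ : ℝ := ∫ τ in Icc (0:ℝ) T, |β τ| with hCβdef
  have hCβ0 : 0 ≤ Cβ := setIntegral_nonneg measurableSet_Icc (fun τ _ => abs_nonneg _)
  set C : ℝ := |y 0| + Cβ + M + 1 with hCdef
  have hC0 : 0 < C := by positivity
  -- it suffices to prove the bound up to ε
  refine le_of_forall_pos_le_add ?_
  intro ε hε
  set δ : ℝ := ε / C with hδdef
  have hδ0 : 0 < δ := div_pos hε hC0
  -- approximate g in L¹ by a continuous nonnegative function g'
  have hgInd : Integrable ((Icc (0:ℝ) T).indicator g) volume :=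
    (integrable_indicator_iff measurableSet_Icc).mpr hg
  obtain ⟨gt, -, hgtclose, hgtcont, hgtint⟩ :=
    hgInd.exists_hasCompactSupport_integral_sub_le hδ0
  set g' : ℝ → ℝ := fun x => max (gt x) 0 with hg'def
  have hg'cont : Continuous g' := hgtcont.max continuous_const
  have hg'0 : ∀ τ, 0 ≤ g' τ := fun τ => le_max_right _ _
  have hg'int : IntegrableOn g' (Icc 0 T) := hg'cont.integrableOn_Icc
  -- L¹ closeness of g' to g on [0, T]
  have hgg'int : IntegrableOn (fun x => |g' x - g x|) (Icc 0 T) := (hg'int.sub hg).abs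
  have hclose : ∫ x in Icc (0:ℝ) T, |g' x - g x| ≤ δ := by
    have s1 : ∫ x in Icc (0:ℝ) T, |g' x - g x|
        ≤ ∫ x in Icc (0:ℝ) T, ‖(Icc (0:ℝ) T).indicator g x - gt x‖ := by
      refine setIntegral_mono_on hgg'int
        ((hgInd.sub hgtint).norm.integrableOn.mono_set (subset_univ _)) measurableSet_Icc ?_
      intro x hx
      rw [Set.indicator_of_mem hx, Real.norm_eq_abs]
      rcases le_total (gt x) 0 with hgt | hgt
      · have : g' x = 0 := max_eq_right hgt
        rw [this]
        have := hg_nonneg x hx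
        rw [abs_of_nonpos (by linarith : (0:ℝ) - g x ≤ 0), abs_of_nonneg (by linarith : (0:ℝ) ≤ g x - gt x)]
        linarith
      · have : g' x = gt x := max_eq_left hgt
        rw [this, abs_sub_comm]
    have s2 : ∫ x in Icc (0:ℝ) T, ‖(Icc (0:ℝ) T).indicator g x - gt x‖
        ≤ ∫ x, ‖(Icc (0:ℝ) T).indicator g x - gt x‖ :=
      setIntegral_le_integral (hgInd.sub hgtint).norm
        (Filter.Eventually.of_forall fun x => norm_nonneg _)
    exact s1.trans (s2.trans hgtclose)
  -- the perturbed source term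
  set β' : ℝ → ℝ := fun τ => β τ + |g' τ - g τ| * |y τ| with hβ'def
  have hyaes : AEStronglyMeasurable y (volume.restrict (Icc 0 T)) :=
    hy.aestronglyMeasurable measurableSet_Icc
  have hyabs : AEStronglyMeasurable (fun τ => |y τ|) (volume.restrict (Icc 0 T)) :=
    hyaes.norm.congr (Filter.Eventually.of_forall fun τ => Real.norm_eq_abs (y τ))
  have herr : IntegrableOn (fun τ => |g' τ - g τ| * |y τ|) (Icc 0 T) := by
    refine Integrable.mono' (hgg'int.mul_const M)
      (hgg'int.aestronglyMeasurable.mul hyabs) ?_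
    filter_upwards [ae_restrict_mem measurableSet_Icc] with τ hτ
    rw [Real.norm_eq_abs, abs_mul, abs_abs, abs_abs]
    refine mul_le_mul_of_nonneg_left ?_ (abs_nonneg _)
    rw [← Real.norm_eq_abs]
    exact hM τ hτ
  have hβ' : IntegrableOn β' (Icc 0 T) := hβ.add herr
  -- interval integrability helper
  have hsub : ∀ (f : ℝ → ℝ), IntegrableOn f (Icc 0 T) → ∀ s u : ℝ, 0 ≤ s → s ≤ u → u ≤ T →
      IntervalIntegrable f volume s u := by
    intro f hf s u hs hsu huT
    have : IntegrableOn f (Icc s u) := hf.mono_set (Icc_subset_Icc hs huT)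
    rw [← uIcc_of_le hsu] at this
    exact this.intervalIntegrable
  have hgy : IntegrableOn (fun τ => g τ * y τ) (Icc 0 T) := by
    refine Integrable.mono' (hg.abs.mul_const M) (hg.aestronglyMeasurable.mul hyaes) ?_
    filter_upwards [ae_restrict_mem measurableSet_Icc] with τ hτ
    rw [Real.norm_eq_abs, abs_mul]
    exact mul_le_mul_of_nonneg_left ((Real.norm_eq_abs (y τ)) ▸ hM τ hτ) (abs_nonneg _)
  have hg'y : IntegrableOn (fun τ => g' τ * y τ) (Icc 0 T) :=
    (hg'cont.continuousOn.mul hy).integrableOn_Icc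
  -- hypothesis for the approximated pair (g', β')
  have h' : ∀ s u : ℝ, 0 ≤ s → s ≤ u → u ≤ T →
      y u + ∫ τ in s..u, g' τ * y τ ≤ y s + ∫ τ in s..u, β' τ := by
    intro s u hs hsu huT
    have h1 := h s u hs hsu huT
    have hgyI := hsub _ hgy s u hs hsu huT
    have hg'yI := hsub _ hg'y s u hs hsu huT
    have herrI := hsub _ herr s u hs hsu huT
    have hβI := hsub _ hβ s u hs hsu huT
    have e1 : ∫ τ in s..u, g' τ * y τ
        = (∫ τ in s..u, g τ * y τ) + ∫ τ in s..u, (g' τ * y τ - g τ * y τ) := by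
      rw [← intervalIntegral.integral_add hgyI (hg'yI.sub hgyI)]
      exact intervalIntegral.integral_congr fun τ _ => by ring
    have e2 : ∫ τ in s..u, (g' τ * y τ - g τ * y τ) ≤ ∫ τ in s..u, |g' τ - g τ| * |y τ| := by
      refine intervalIntegral.integral_mono_on hsu (hg'yI.sub hgyI) herrI fun τ hτ => ?_
      calc g' τ * y τ - g τ * y τ = (g' τ - g τ) * y τ := by ring
        _ ≤ |(g' τ - g τ) * y τ| := le_abs_self _
        _ = |g' τ - g τ| * |y τ| := abs_mul _ _
    have e3 : ∫ τ in s..u, β' τ = (∫ τ in s..u, β τ) + ∫ τ in s..u, |g' τ - g τ| * |y τ| :=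
      intervalIntegral.integral_add hβI herrI
    linarith
  have hcore := gronwall_core T y β' g' hy hβ' hg'cont hg'0 h' t ⟨ht0, htT⟩
  -- exponent estimates
  have hA0 : ∀ τ, 0 ≤ τ → τ ≤ t → 0 ≤ ∫ r in τ..t, g r := fun τ hτ0 hτt =>
    intervalIntegral.integral_nonneg hτt fun u hu => hg_nonneg u ⟨hτ0.trans hu.1, hu.2.trans htT⟩
  have hA'0 : ∀ τ, τ ≤ t → 0 ≤ ∫ r in τ..t, g' r := fun τ hτt =>
    intervalIntegral.integral_nonneg hτt fun u _ => hg'0 u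
  have habs_sub : ∀ τ, 0 ≤ τ → τ ≤ t → ∫ r in τ..t, |g' r - g r| ≤ δ := by
    intro τ hτ0 hτt
    rw [intervalIntegral.integral_of_le hτt]
    refine le_trans (setIntegral_mono_set hgg'int ?_ ?_) hclose
    · filter_upwards with x using abs_nonneg _
    · exact HasSubset.Subset.eventuallyLE fun x hx => ⟨hτ0.trans hx.1.le, hx.2.trans htT⟩
  have hdiff : ∀ τ, 0 ≤ τ → τ ≤ t →
      |(∫ r in τ..t, g' r) - ∫ r in τ..t, g r| ≤ δ := by
    intro τ hτ0 hτt
    have e1 : (∫ r in τ..t, g' r) - ∫ r in τ..t, g r = ∫ r in τ..t, (g' r - g r) :=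
      (intervalIntegral.integral_sub (hg'cont.intervalIntegrable τ t)
        (hsub g hg τ t hτ0 hτt htT)).symm
    rw [e1]
    exact (intervalIntegral.abs_integral_le_integral_abs hτt).trans (habs_sub τ hτ0 hτt)
  have hexp : ∀ τ, 0 ≤ τ → τ ≤ t →
      |Real.exp (-∫ r in τ..t, g' r) - Real.exp (-∫ r in τ..t, g r)| ≤ δ := fun τ hτ0 hτt =>
    (exp_neg_lip (hA'0 τ hτt) (hA0 τ hτ0 hτt)).trans (hdiff τ hτ0 hτt)
  -- continuity of the exponential weights
  have hG'prim : Continuous fun τ => ∫ r in (0:ℝ)..τ, g' r :=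
    intervalIntegral.continuous_primitive (fun c d => hg'cont.intervalIntegrable c d) 0
  have hA'eq : ∀ τ : ℝ, (∫ r in τ..t, g' r)
      = (∫ r in (0:ℝ)..t, g' r) - ∫ r in (0:ℝ)..τ, g' r := by
    intro τ
    have := intervalIntegral.integral_add_adjacent_intervals (μ := volume)
      (hg'cont.intervalIntegrable 0 τ) (hg'cont.intervalIntegrable τ t)
    linarith
  have hE'cont : Continuous fun τ => Real.exp (-∫ r in τ..t, g' r) := by
    have hc : Continuous fun τ =>
        Real.exp (-((∫ r in (0:ℝ)..t, g' r) - ∫ r in (0:ℝ)..τ, g' r)) :=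
      Real.continuous_exp.comp (continuous_const.sub hG'prim).neg
    refine hc.congr fun τ => ?_
    rw [hA'eq τ]
  have hguIcc : IntegrableOn g (uIcc 0 t) volume := by
    rw [uIcc_of_le ht0]; exact hg.mono_set (Icc_subset_Icc le_rfl htT)
  have hgprim : ContinuousOn (fun τ => ∫ r in (0:ℝ)..τ, g r) (uIcc 0 t) :=
    intervalIntegral.continuousOn_primitive_interval hguIcc
  have hAeqOn : ∀ τ ∈ uIcc (0:ℝ) t, (∫ r in τ..t, g r)
      = (∫ r in (0:ℝ)..t, g r) - ∫ r in (0:ℝ)..τ, g r := by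
    intro τ hτ
    rw [uIcc_of_le ht0] at hτ
    have := intervalIntegral.integral_add_adjacent_intervals
      (hsub g hg 0 τ le_rfl hτ.1 (hτ.2.trans htT)) (hsub g hg τ t hτ.1 hτ.2 htT)
    linarith
  have hEcontOn : ContinuousOn (fun τ => Real.exp (-∫ r in τ..t, g r)) (uIcc 0 t) := by
    have hc : ContinuousOn (fun τ =>
        Real.exp (-((∫ r in (0:ℝ)..t, g r) - ∫ r in (0:ℝ)..τ, g r))) (uIcc 0 t) :=
      Real.continuous_exp.comp_continuousOn (continuousOn_const.sub hgprim).neg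
    refine ContinuousOn.congr hc fun τ hτ => ?_
    rw [hAeqOn τ hτ]
  -- interval integrabilities of weighted integrands on [0, t]
  have hIβe' : IntervalIntegrable (fun τ => Real.exp (-∫ r in τ..t, g' r) * β τ) volume 0 t :=
    (hsub β hβ 0 t le_rfl ht0 htT).continuousOn_mul hE'cont.continuousOn
  have hIerr' : IntervalIntegrable
      (fun τ => Real.exp (-∫ r in τ..t, g' r) * (|g' τ - g τ| * |y τ|)) volume 0 t :=
    (hsub _ herr 0 t le_rfl ht0 htT).continuousOn_mul hE'cont.continuousOn
  have hIβe : IntervalIntegrable (fun τ => Real.exp (-∫ r in τ..t, g r) * β τ) volume 0 t :=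
    (hsub β hβ 0 t le_rfl ht0 htT).continuousOn_mul hEcontOn
  have hIabsβ : IntervalIntegrable (fun τ => |β τ|) volume 0 t :=
    (hsub β hβ 0 t le_rfl ht0 htT).abs
  have hIgg' : IntervalIntegrable (fun τ => |g' τ - g τ|) volume 0 t :=
    hsub _ hgg'int 0 t le_rfl ht0 htT
  -- term 1 estimate
  have harith : ∀ c e1 e2 d : ℝ, |e1 - e2| ≤ d → c * e1 ≤ c * e2 + |c| * d := by
    intro c e1 e2 d hd
    have h1 : c * (e1 - e2) ≤ |c| * d :=
      calc c * (e1 - e2) ≤ |c * (e1 - e2)| := le_abs_self _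
        _ = |c| * |e1 - e2| := abs_mul _ _
        _ ≤ |c| * d := mul_le_mul_of_nonneg_left hd (abs_nonneg _)
    have h2 : c * e1 - c * e2 = c * (e1 - e2) := by ring
    linarith
  have hterm1 : y 0 * Real.exp (-∫ r in (0:ℝ)..t, g' r)
      ≤ y 0 * Real.exp (-∫ τ in (0:ℝ)..t, g τ) + |y 0| * δ :=
    harith (y 0) _ _ δ (hexp 0 le_rfl ht0)
  -- term 2 estimates
  have hterm2a : ∫ τ in (0:ℝ)..t, Real.exp (-∫ r in τ..t, g' r) * β' τ
      = (∫ τ in (0:ℝ)..t, Real.exp (-∫ r in τ..t, g' r) * β τ)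
        + ∫ τ in (0:ℝ)..t, Real.exp (-∫ r in τ..t, g' r) * (|g' τ - g τ| * |y τ|) := by
    rw [← intervalIntegral.integral_add hIβe' hIerr']
    exact intervalIntegral.integral_congr fun τ _ => by simp only [hβ'def]; ring
  have hterm2b : ∫ τ in (0:ℝ)..t, Real.exp (-∫ r in τ..t, g' r) * (|g' τ - g τ| * |y τ|)
      ≤ M * δ := by
    have step : ∫ τ in (0:ℝ)..t, Real.exp (-∫ r in τ..t, g' r) * (|g' τ - g τ| * |y τ|)
        ≤ ∫ τ in (0:ℝ)..t, |g' τ - g τ| * M := by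
      refine intervalIntegral.integral_mono_on ht0 hIerr' (hIgg'.mul_const M) fun τ hτ => ?_
      have he1 : Real.exp (-∫ r in τ..t, g' r) ≤ 1 :=
        Real.exp_le_one_iff.mpr (neg_nonpos.mpr (hA'0 τ hτ.2))
      have he0 : 0 < Real.exp (-∫ r in τ..t, g' r) := Real.exp_pos _
      have hyM : |y τ| ≤ M := by
        rw [← Real.norm_eq_abs]; exact hM τ ⟨hτ.1, hτ.2.trans htT⟩
      calc Real.exp (-∫ r in τ..t, g' r) * (|g' τ - g τ| * |y τ|)
          ≤ 1 * (|g' τ - g τ| * |y τ|) :=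
            mul_le_mul_of_nonneg_right he1 (mul_nonneg (abs_nonneg _) (abs_nonneg _))
        _ = |g' τ - g τ| * |y τ| := one_mul _
        _ ≤ |g' τ - g τ| * M := mul_le_mul_of_nonneg_left hyM (abs_nonneg _)
    have step2 : ∫ τ in (0:ℝ)..t, |g' τ - g τ| * M
        = (∫ τ in (0:ℝ)..t, |g' τ - g τ|) * M := intervalIntegral.integral_mul_const _ _
    have step3 := habs_sub 0 le_rfl ht0
    nlinarith [step, step2, step3]
  have hβabsT : IntegrableOn (fun τ => |β τ|) (Icc 0 T) := hβ.abs
  have hterm2c : ∫ τ in (0:ℝ)..t, Real.exp (-∫ r in τ..t, g' r) * β τ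
      ≤ (∫ τ in (0:ℝ)..t, Real.exp (-∫ r in τ..t, g r) * β τ) + Cβ * δ := by
    have d1 : ∫ τ in (0:ℝ)..t, (Real.exp (-∫ r in τ..t, g' r) * β τ
          - Real.exp (-∫ r in τ..t, g r) * β τ)
        ≤ ∫ τ in (0:ℝ)..t, δ * |β τ| := by
      refine intervalIntegral.integral_mono_on ht0 (hIβe'.sub hIβe) (hIabsβ.const_mul δ)
        fun τ hτ => ?_
      calc Real.exp (-∫ r in τ..t, g' r) * β τ - Real.exp (-∫ r in τ..t, g r) * β τ
          = (Real.exp (-∫ r in τ..t, g' r) - Real.exp (-∫ r in τ..t, g r)) * β τ := by ring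
        _ ≤ |(Real.exp (-∫ r in τ..t, g' r) - Real.exp (-∫ r in τ..t, g r)) * β τ| :=
            le_abs_self _
        _ = |Real.exp (-∫ r in τ..t, g' r) - Real.exp (-∫ r in τ..t, g r)| * |β τ| :=
            abs_mul _ _
        _ ≤ δ * |β τ| := mul_le_mul_of_nonneg_right (hexp τ hτ.1 hτ.2) (abs_nonneg _)
    have d2 : ∫ τ in (0:ℝ)..t, (Real.exp (-∫ r in τ..t, g' r) * β τ
          - Real.exp (-∫ r in τ..t, g r) * β τ)
        = (∫ τ in (0:ℝ)..t, Real.exp (-∫ r in τ..t, g' r) * β τ)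
          - ∫ τ in (0:ℝ)..t, Real.exp (-∫ r in τ..t, g r) * β τ :=
      intervalIntegral.integral_sub hIβe' hIβe
    have d3 : ∫ τ in (0:ℝ)..t, δ * |β τ| = δ * ∫ τ in (0:ℝ)..t, |β τ| :=
      intervalIntegral.integral_const_mul _ _
    have d4 : ∫ τ in (0:ℝ)..t, |β τ| ≤ Cβ := by
      rw [intervalIntegral.integral_of_le ht0]
      refine setIntegral_mono_set hβabsT ?_ ?_
      · filter_upwards with x using abs_nonneg _
      · exact HasSubset.Subset.eventuallyLE fun x hx => ⟨hx.1.le, hx.2.trans htT⟩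
    nlinarith [d1, d2, d3, d4, hδ0.le]
  -- assemble
  have hCδ : C * δ = ε := by
    rw [hδdef]; field_simp
  have hcoef : (|y 0| + Cβ + M) * δ ≤ C * δ := by
    have : |y 0| + Cβ + M ≤ C := by rw [hCdef]; linarith
    exact mul_le_mul_of_nonneg_right this hδ0.le
  calc y t ≤ y 0 * Real.exp (-∫ r in (0:ℝ)..t, g' r)
        + ∫ τ in (0:ℝ)..t, Real.exp (-∫ r in τ..t, g' r) * β' τ := hcore
    _ ≤ (y 0 * Real.exp (-∫ τ in (0:ℝ)..t, g τ)
        + ∫ τ in (0:ℝ)..t, Real.exp (-∫ r in τ..t, g r) * β τ) + ε := by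
      have expand : (|y 0| + Cβ + M) * δ = |y 0| * δ + Cβ * δ + M * δ := by ring
      linarith [hterm1, hterm2a.le, hterm2b, hterm2c, hcoef, hCδ.le, hCδ.ge]
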